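/- For all real numbers a, b and every complex number ζ such that sinh(ζ + iπb) ≠ i·sin(πa), sinh(ζ − iπb) ≠ i·sin(πa), sinh ζ ≠ i·sin(π(a+b)), and sinh ζ ≠ i·sin(π(a−b)), the bootstrap identity f_a(ζ + iπb)·f_a(ζ − iπb) = f_{a+b}(ζ)·f_{a−b}(ζ) holds, where f_a(ζ) = (sinh ζ + i·sin(πa))/(sinh ζ − i·sin(πa)). (With a = ν and b = ν/2 this is the bootstrap equation for the Sine-Gordon fusion (b_1 b_1) → b_2: f_ν(ζ + iπν/2)·f_ν(ζ − iπν/2) = f_{ν/2}(ζ)·f_{3ν/2}(ζ) = S^{b1b2}(ζ).) -/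

import Mathlib

/-- Bootstrap identity `f_a(ζ + iπb) · f_a(ζ - iπb) = f_{a+b}(ζ) · f_{a-b}(ζ)` for
`f_a(ζ) = (sinh ζ + i sin(πa)) / (sinh ζ - i sin(πa))`, away from the poles of both
sides. With `a = ν`, `b = ν/2` this is the bootstrap equation for the Sine-Gordon
fusion `(b_1 b_1) → b_2`. -/
theorem sineGordon_bootstrap (a b : ℝ) (ζ : ℂ)
    (h₁ : Complex.sinh (ζ + Complex.I * ((Real.pi * b : ℝ) : ℂ))
      ≠ Complex.I * ((Real.sin (Real.pi * a) : ℝ) : ℂ))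
    (h₂ : Complex.sinh (ζ - Complex.I * ((Real.pi * b : ℝ) : ℂ))
      ≠ Complex.I * ((Real.sin (Real.pi * a) : ℝ) : ℂ))
    (h₃ : Complex.sinh ζ ≠ Complex.I * ((Real.sin (Real.pi * (a + b)) : ℝ) : ℂ))
    (h₄ : Complex.sinh ζ ≠ Complex.I * ((Real.sin (Real.pi * (a - b)) : ℝ) : ℂ)) :
    ((Complex.sinh (ζ + Complex.I * ((Real.pi * b : ℝ) : ℂ))
          + Complex.I * ((Real.sin (Real.pi * a) : ℝ) : ℂ))
        / (Complex.sinh (ζ + Complex.I * ((Real.pi * b : ℝ) : ℂ))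
          - Complex.I * ((Real.sin (Real.pi * a) : ℝ) : ℂ)))
      * ((Complex.sinh (ζ - Complex.I * ((Real.pi * b : ℝ) : ℂ))
          + Complex.I * ((Real.sin (Real.pi * a) : ℝ) : ℂ))
        / (Complex.sinh (ζ - Complex.I * ((Real.pi * b : ℝ) : ℂ))
          - Complex.I * ((Real.sin (Real.pi * a) : ℝ) : ℂ)))
    = ((Complex.sinh ζ + Complex.I * ((Real.sin (Real.pi * (a + b)) : ℝ) : ℂ))
        / (Complex.sinh ζ - Complex.I * ((Real.sin (Real.pi * (a + b)) : ℝ) : ℂ)))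
      * ((Complex.sinh ζ + Complex.I * ((Real.sin (Real.pi * (a - b)) : ℝ) : ℂ))
        / (Complex.sinh ζ - Complex.I * ((Real.sin (Real.pi * (a - b)) : ℝ) : ℂ))) := by
  have key : ∀ x y : ℂ, Complex.sinh (x + Complex.I * y)
      = Complex.sinh x * Complex.cos y + Complex.cosh x * (Complex.sin y * Complex.I) := by
    intro x y
    rw [Complex.sinh_add, mul_comm Complex.I y, Complex.cosh_mul_I, Complex.sinh_mul_I]
  have key' : ∀ x y : ℂ, Complex.sinh (x - Complex.I * y)
      = Complex.sinh x * Complex.cos y - Complex.cosh x * (Complex.sin y * Complex.I) := by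
    intro x y
    rw [sub_eq_add_neg, ← mul_neg, key, Complex.cos_neg, Complex.sin_neg, neg_mul, mul_neg,
      ← sub_eq_add_neg]
  have hπab : (Real.sin (Real.pi * (a + b)) : ℂ)
      = Complex.sin (Real.pi * a) * Complex.cos (Real.pi * b)
        + Complex.cos (Real.pi * a) * Complex.sin (Real.pi * b) := by
    push_cast
    rw [mul_add, Complex.sin_add]
  have hπab' : (Real.sin (Real.pi * (a - b)) : ℂ)
      = Complex.sin (Real.pi * a) * Complex.cos (Real.pi * b)
        - Complex.cos (Real.pi * a) * Complex.sin (Real.pi * b) := by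
    push_cast
    rw [mul_sub, Complex.sin_sub]
  have e₁ := sub_ne_zero.mpr h₁
  have e₂ := sub_ne_zero.mpr h₂
  have e₃ := sub_ne_zero.mpr h₃
  have e₄ := sub_ne_zero.mpr h₄
  rw [key ζ ((Real.pi * b : ℝ) : ℂ), key' ζ ((Real.pi * b : ℝ) : ℂ), hπab, hπab',
      Complex.ofReal_sin] at *
  simp only [Complex.ofReal_mul] at *
  set s := Complex.sinh ζ
  set c := Complex.cosh ζ
  set A := Complex.sin ((Real.pi : ℂ) * (a : ℂ))
  set D := Complex.cos ((Real.pi : ℂ) * (a : ℂ))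
  set B := Complex.sin ((Real.pi : ℂ) * (b : ℂ))
  set C := Complex.cos ((Real.pi : ℂ) * (b : ℂ))
  have r1 : c ^ 2 - s ^ 2 = 1 := Complex.cosh_sq_sub_sinh_sq ζ
  have r2 : B ^ 2 + C ^ 2 = 1 := Complex.sin_sq_add_cos_sq _
  have r3 : A ^ 2 + D ^ 2 = 1 := Complex.sin_sq_add_cos_sq _
  have hI : Complex.I ^ 2 = -1 := Complex.I_sq
  rw [div_mul_div_comm, div_mul_div_comm, div_eq_div_iff (mul_ne_zero e₁ e₂) (mul_ne_zero e₃ e₄)]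
  linear_combination (-(4 * Complex.I) * s * A * B ^ 2 * C) * r1
    + (-(4 * Complex.I) * s * A * C * (A ^ 2 + s ^ 2)) * r2
    + (4 * Complex.I * s * A * B ^ 2 * C) * r3
    + (4 * s * C * Complex.I * A * (c ^ 2 * B ^ 2 - B ^ 2 * D ^ 2 - A ^ 2 + C ^ 2 * A ^ 2)) * hI
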